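/- For every integer n ≥ 1 and every integer k with 1 ≤ k ≤ n-1, the binomial coefficient satisfies binom(n,k) ≤ sqrt(n/(2π·k·(n-k))) · 2^(n·h(k/n)), where h(p) = -p·log₂(p) - (1-p)·log₂(1-p) is the binary entropy function. -/

import Mathlib

open Real Filter Nat Topology

lemma sqrt_pi_le_stirlingSeq {n : ℕ} (hn : 1 ≤ n) : √π ≤ Stirling.stirlingSeq n := by
  obtain ⟨m, rfl⟩ := Nat.exists_eq_add_of_le hn
  have h : Tendsto (Stirling.stirlingSeq ∘ Nat.succ) atTop (𝓝 (√π)) :=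
    (Filter.tendsto_add_atTop_iff_nat 1).mpr Stirling.tendsto_stirlingSeq_sqrt_pi
  simpa [Nat.add_comm] using Stirling.stirlingSeq'_antitone.le_of_tendsto h m

lemma factorial_eq (n : ℕ) (hn : 1 ≤ n) :
    (n.factorial : ℝ) = Stirling.stirlingSeq n * (√(2 * n) * ((n : ℝ) / exp 1) ^ n) := by
  rw [Stirling.stirlingSeq, div_mul_cancel₀]
  have : (0:ℝ) < n := by exact_mod_cast hn
  positivity

noncomputable def binEnt (p : ℝ) : ℝ := -p * Real.logb 2 p - (1 - p) * Real.logb 2 (1 - p)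

lemma two_rpow_ent (k m : ℕ) (hk : 1 ≤ k) (hm : 1 ≤ m) :
    (2 : ℝ) ^ (((k + m : ℕ) : ℝ) * binEnt ((k : ℝ) / (k + m : ℕ))) =
      ((k + m : ℕ) : ℝ) ^ (k + m) / ((k : ℝ) ^ k * (m : ℝ) ^ m) := by
  have hkp : (0:ℝ) < k := by exact_mod_cast hk
  have hmp : (0:ℝ) < m := by exact_mod_cast hm
  have hN : (0:ℝ) < ((k + m : ℕ) : ℝ) := by push_cast; linarith
  set N : ℝ := ((k + m : ℕ) : ℝ) with hNdef
  have h1 : 1 - (k : ℝ) / N = (m : ℝ) / N := by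
    field_simp [hNdef]
    rw [hNdef]; push_cast; ring
  have hrhs : (0:ℝ) < N ^ (k + m) / ((k : ℝ) ^ k * (m : ℝ) ^ m) := by positivity
  rw [← Real.exp_log hrhs, Real.rpow_def_of_pos (by norm_num)]
  congr 1
  have hlogN : Real.log (N ^ (k+m) / ((k:ℝ)^k * (m:ℝ)^m))
      = (k + m) * Real.log N - k * Real.log k - m * Real.log m := by
    rw [Real.log_div (by positivity) (by positivity), Real.log_mul (by positivity) (by positivity),
      Real.log_pow, Real.log_pow, Real.log_pow]
    push_cast; ring
  rw [hlogN, binEnt, h1]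
  have hl2 : Real.log 2 ≠ 0 := ne_of_gt (Real.log_pos (by norm_num))
  rw [Real.logb, Real.logb, Real.log_div (ne_of_gt hkp) (ne_of_gt hN),
    Real.log_div (ne_of_gt hmp) (ne_of_gt hN)]
  have hNcast : N = (k:ℝ) + m := by push_cast [hNdef]; ring
  field_simp
  ring

lemma stirlingSeq_le {i j : ℕ} (hi : 1 ≤ i) (hij : i ≤ j) :
    Stirling.stirlingSeq j ≤ Stirling.stirlingSeq i := by
  obtain ⟨a, rfl⟩ := Nat.exists_eq_add_of_le hi
  obtain ⟨b, rfl⟩ := Nat.exists_eq_add_of_le hij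
  have h := Stirling.stirlingSeq'_antitone (Nat.le_add_right a b)
  simp only [Function.comp] at h
  rw [show 1 + a + b = (a + b).succ by omega, show 1 + a = a.succ by omega]; exact h

theorem binom_upper_bound (n k : ℕ) (hn : 1 ≤ n) (hk1 : 1 ≤ k) (hk2 : k ≤ n - 1) :
    (n.choose k : ℝ) ≤
      Real.sqrt ((n : ℝ) / (2 * Real.pi * k * (n - k))) *
        (2 : ℝ) ^ ((n : ℝ) * binEnt ((k : ℝ) / n)) := by
  obtain ⟨m, hm1, rfl⟩ : ∃ m, 1 ≤ m ∧ n = k + m := ⟨n - k, by omega, by omega⟩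
  have hkp : (0:ℝ) < k := by exact_mod_cast hk1
  have hmp : (0:ℝ) < m := by exact_mod_cast hm1
  have hNp : (0:ℝ) < ((k + m : ℕ) : ℝ) := by push_cast; linarith
  have hsub : ((k + m : ℕ) : ℝ) - (k:ℝ) = (m:ℝ) := by push_cast; ring
  rw [hsub, two_rpow_ent k m hk1 hm1, Nat.cast_add_choose,
    factorial_eq (k+m) (by omega), factorial_eq k hk1, factorial_eq m hm1]
  set N : ℝ := ((k + m : ℕ) : ℝ) with hNdef
  set a := Stirling.stirlingSeq (k+m) with hadef
  set b := Stirling.stirlingSeq k with hbdef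
  set c := Stirling.stirlingSeq m with hcdef
  have hb : 0 < b := by
    have := Nat.exists_eq_add_of_le hk1; obtain ⟨i, hi⟩ := this
    rw [hbdef, hi, Nat.add_comm]; exact Stirling.stirlingSeq'_pos i
  have hc : 0 < c := by
    have := Nat.exists_eq_add_of_le hm1; obtain ⟨i, hi⟩ := this
    rw [hcdef, hi, Nat.add_comm]; exact Stirling.stirlingSeq'_pos i
  have hpi : (0:ℝ) < √π := Real.sqrt_pos.mpr Real.pi_pos
  have key : a * √π ≤ b * c :=
    mul_le_mul (stirlingSeq_le hk1 (Nat.le_add_right k m))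
      (sqrt_pi_le_stirlingSeq hm1) hpi.le hb.le
  have ha' : a ≤ b * c / √π := (le_div_iff₀ hpi).mpr key
  have hEk : (0:ℝ) < Real.exp 1 := Real.exp_pos 1
  -- denominators positive
  have hden : (0:ℝ) < b * (√(2*(k:ℝ)) * ((k:ℝ)/Real.exp 1)^k) * (c * (√(2*(m:ℝ)) * ((m:ℝ)/Real.exp 1)^m)) := by
    positivity
  rw [div_le_iff₀ hden]
  have step1 : a * (√(2*N) * (N/Real.exp 1)^(k+m)) ≤ (b * c / √π) * (√(2*N) * (N/Real.exp 1)^(k+m)) := by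
    apply mul_le_mul_of_nonneg_right ha'
    positivity
  refine step1.trans (le_of_eq ?_)
  have hsq : √(N/(2*π*(k:ℝ)*(m:ℝ))) = √(2*N) / √π / (√(2*(k:ℝ)) * √(2*(m:ℝ))) := by
    rw [← Real.sqrt_div (by positivity) π, ← Real.sqrt_mul (by positivity)]
    rw [eq_div_iff (by positivity), ← Real.sqrt_mul (by positivity)]
    congr 1
    field_simp
  rw [hsq]
  have h2k : √(2*(k:ℝ)) ≠ 0 := by positivity
  have h2m : √(2*(m:ℝ)) ≠ 0 := by positivity
  have hKk : ((k:ℝ))^k ≠ 0 := by positivity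
  have hMm : ((m:ℝ))^m ≠ 0 := by positivity
  field_simp
  rw [div_pow, div_pow, div_pow, pow_add (rexp 1)]
  ring
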